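/- Let G have T triangles and τ = 12(T/ε²)^{1/3} for ε ∈ (0,2). Then the number of light triangles (triangles with at least one τ-light edge) is at least (1 − ε/8)T. -/

import Mathlib

attribute [local instance] Classical.propDecidable

set_option maxHeartbeats 1000000
set_option maxRecDepth 8000

open scoped FinsetFamily

lemma my_c2 (a : ℕ) : 2 * (a+1).choose 2 = a * (a+1) := by
  induction a with
  | zero => rfl
  | succ n ih =>
    rw [show n+1+1 = n+2 from rfl, Nat.choose_succ_succ (n+1) 1, Nat.mul_add, ih,
      Nat.choose_one_right]; ring

lemma my_c3 (a : ℕ) : 6 * (a+2).choose 3 = a * (a+1) * (a+2) := by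
  induction a with
  | zero => rfl
  | succ n ih =>
    rw [show n+1+2 = n+2+1 from rfl, Nat.choose_succ_succ (n+2) 2, Nat.mul_add, ih]
    have := my_c2 (n+1)
    nlinarith [this]

open Finset in
lemma my_kk {V : Type*} [Fintype V] [DecidableEq V] (𝒜 : Finset (Finset V))
    (h3 : (𝒜 : Set (Finset V)).Sized 3) (k : ℕ) (hk : 3 ≤ k)
    (hcard : k.choose 3 ≤ 𝒜.card) : k.choose 2 ≤ (∂ 𝒜).card := by
  classical
  set n := Fintype.card V + k with hn
  obtain ⟨f⟩ : Nonempty (V ↪ Fin n) :=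
    Function.Embedding.nonempty_of_card_le (by simp [hn])
  set ℬ : Finset (Finset (Fin n)) := 𝒜.image (Finset.map f) with hB
  have hBcard : ℬ.card = 𝒜.card :=
    Finset.card_image_of_injective _ (Finset.map_injective f)
  have hBsized : (ℬ : Set (Finset (Fin n))).Sized 3 := by
    intro s hs
    simp only [hB, coe_image, Set.mem_image, mem_coe] at hs
    obtain ⟨t, ht, rfl⟩ := hs
    rw [Finset.card_map]; exact h3 ht
  have key := Finset.kruskal_katona_lovasz_form (i := 1) (r := 3) (k := k) (n := n)
    (by norm_num) hk (by omega) hBsized (hBcard ▸ hcard)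
  rw [show 3 - 1 = 2 from rfl] at key
  have hsub : ∂ ℬ ⊆ (∂ 𝒜).image (Finset.map f) := by
    intro t ht
    rw [mem_shadow_iff] at ht
    obtain ⟨s', hs', x, hx, rfl⟩ := ht
    rw [hB, mem_image] at hs'
    obtain ⟨s, hs, rfl⟩ := hs'
    rw [Finset.mem_map] at hx
    obtain ⟨a, ha, rfl⟩ := hx
    rw [← Finset.map_erase]
    exact mem_image_of_mem _ (erase_mem_shadow hs ha)
  have key' : k.choose 2 ≤ (∂ ℬ).card := by
    have := key
    simpa using this
  calc k.choose 2 ≤ (∂ ℬ).card := key'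
    _ ≤ ((∂ 𝒜).image (Finset.map f)).card := Finset.card_le_card hsub
    _ ≤ (∂ 𝒜).card := Finset.card_image_le

lemma my_tri_edges {V : Type*} [Fintype V] [DecidableEq V] (G : SimpleGraph V)
    [DecidableRel G.Adj] {t : Finset V}
    (ht : G.IsNClique 3 t) :
    (G.edgeFinset.filter (fun e => e ∈ t.sym2)).card = 3 := by
  obtain ⟨a, b, c, hab, hac, hbc, rfl⟩ := Finset.card_eq_three.mp ht.card_eq
  have hc := ht.isClique
  rw [Finset.coe_insert, Finset.coe_insert, Finset.coe_singleton] at hc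
  have hAB : G.Adj a b := hc (by simp) (by simp) hab
  have hAC : G.Adj a c := hc (by simp) (by simp) hac
  have hBC : G.Adj b c := hc (by simp) (by simp) hbc
  have : G.edgeFinset.filter (fun e => e ∈ ({a,b,c} : Finset V).sym2)
      = {s(a,b), s(a,c), s(b,c)} := by
    ext e
    induction e with
    | _ x y =>
      simp only [Finset.mem_filter, SimpleGraph.mem_edgeFinset, SimpleGraph.mem_edgeSet,
        Finset.mk_mem_sym2_iff, Finset.mem_insert, Finset.mem_singleton, Sym2.eq_iff]
      constructor
      · rintro ⟨hadj, (rfl|rfl|rfl), (rfl|rfl|rfl)⟩ <;>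
          first
          | exact absurd hadj (G.irrefl)
          | tauto
      · rintro ((⟨rfl,rfl⟩|⟨rfl,rfl⟩)|(⟨rfl,rfl⟩|⟨rfl,rfl⟩)|(⟨rfl,rfl⟩|⟨rfl,rfl⟩)) <;>
          refine ⟨?_, by tauto⟩ <;>
          first
          | exact hAB | exact hAC | exact hBC
          | exact hAB.symm | exact hAC.symm | exact hBC.symm
  rw [this]
  rw [Finset.card_insert_of_notMem (by simp [Sym2.eq_iff]; tauto),
    Finset.card_insert_of_notMem (by simp [Sym2.eq_iff]; tauto), Finset.card_singleton]

/-- With `T` triangles and `τ = 12 (T/ε²)^(1/3)` for `ε ∈ (0,2)`, the number of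
light triangles (triangles having at least one `τ`-light edge, i.e. an edge
contained in fewer than `τ` triangles) is at least `(1 - ε/8) T`. -/
theorem light_triangles_card_ge {V : Type*} [Fintype V] [DecidableEq V]
    (G : SimpleGraph V) [DecidableRel G.Adj] (ε : ℝ) (hε : ε ∈ Set.Ioo (0 : ℝ) 2)
    (T : ℕ) (hT : T = (G.cliqueFinset 3).card) (hT0 : 0 < T)
    (τ : ℝ) (hτ : τ = 12 * ((T : ℝ) / ε ^ 2) ^ ((1 : ℝ) / 3)) :
    (1 - ε / 8) * T ≤
      (((G.cliqueFinset 3).filter (fun Δ => ∃ e ∈ Δ.sym2, e ∈ G.edgeFinset ∧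
        (((G.cliqueFinset 3).filter (fun t => e ∈ t.sym2)).card : ℝ) < τ)).card : ℝ) := by
  obtain ⟨hε0, hε2⟩ := hε
  have hTpos : (0:ℝ) < T := by exact_mod_cast hT0
  set 𝒯 := G.cliqueFinset 3 with h𝒯
  set P : Finset V → Prop := fun Δ => ∃ e ∈ Δ.sym2, e ∈ G.edgeFinset ∧
    ((𝒯.filter (fun t => e ∈ t.sym2)).card : ℝ) < τ with hP
  set H := (𝒯.filter fun Δ => ¬ P Δ).card with hH
  have hpart : (𝒯.filter P).card + H = T := by
    rw [hT, hH]; exact Finset.card_filter_add_card_filter_not P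
  suffices hHb : (H:ℝ) ≤ ε/8 * T by
    have h1 : ((𝒯.filter P).card : ℝ) + H = T := by exact_mod_cast congrArg (Nat.cast (R := ℝ)) hpart
    linarith
  set Eh := G.edgeFinset.filter
    (fun e => τ ≤ ((𝒯.filter (fun t => e ∈ t.sym2)).card : ℝ)) with hEh
  set m := Eh.card with hm
  have hτ0 : 0 < τ := by
    rw [hτ]
    have : (0:ℝ) < (T : ℝ) / ε ^ 2 := by positivity
    have := Real.rpow_pos_of_pos this ((1:ℝ)/3)
    linarith
  have heavy_edge : ∀ Δ ∈ 𝒯.filter (fun Δ => ¬ P Δ), ∀ e ∈ Δ.sym2,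
      e ∈ G.edgeFinset → e ∈ Eh := by
    intro Δ hΔ e he heE
    have hnp : ¬ P Δ := (Finset.mem_filter.mp hΔ).2
    simp only [hP] at hnp
    push_neg at hnp
    rw [hEh]
    exact Finset.mem_filter.mpr ⟨heE, hnp e he heE⟩
  have hsum : ∑ e ∈ G.edgeFinset, (𝒯.filter (fun t => e ∈ t.sym2)).card = 3 * T := by
    have htri : ∀ t ∈ 𝒯, (G.edgeFinset.filter (fun e => e ∈ t.sym2)).card = 3 := fun t ht =>
      my_tri_edges G (SimpleGraph.mem_cliqueFinset_iff.mp ht)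
    calc ∑ e ∈ G.edgeFinset, (𝒯.filter (fun t => e ∈ t.sym2)).card
        = ∑ e ∈ G.edgeFinset, ∑ t ∈ 𝒯, if e ∈ t.sym2 then 1 else 0 := by
          simp only [Finset.card_filter]
      _ = ∑ t ∈ 𝒯, ∑ e ∈ G.edgeFinset, if e ∈ t.sym2 then 1 else 0 := Finset.sum_comm
      _ = ∑ t ∈ 𝒯, (G.edgeFinset.filter (fun e => e ∈ t.sym2)).card := by
          simp only [Finset.card_filter]
      _ = ∑ t ∈ 𝒯, 3 := Finset.sum_congr rfl htri
      _ = 3 * T := by rw [Finset.sum_const, hT, smul_eq_mul, mul_comm]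
  have hmτ : (m:ℝ) * τ ≤ 3 * T := by
    have h1 : (m:ℝ) * τ ≤ ∑ e ∈ Eh, ((𝒯.filter (fun t => e ∈ t.sym2)).card : ℝ) := by
      calc (m:ℝ) * τ = ∑ _e ∈ Eh, τ := by
            rw [Finset.sum_const, nsmul_eq_mul, ← hm]
        _ ≤ ∑ e ∈ Eh, ((𝒯.filter (fun t => e ∈ t.sym2)).card : ℝ) :=
            Finset.sum_le_sum (fun e he => by
              rw [hEh] at he; exact (Finset.mem_filter.mp he).2)
    have h2 : ∑ e ∈ Eh, ((𝒯.filter (fun t => e ∈ t.sym2)).card : ℝ)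
        ≤ ∑ e ∈ G.edgeFinset, ((𝒯.filter (fun t => e ∈ t.sym2)).card : ℝ) :=
      Finset.sum_le_sum_of_subset_of_nonneg (by rw [hEh]; exact Finset.filter_subset _ _)
        (fun i _ _ => Nat.cast_nonneg _)
    have h3 : ∑ e ∈ G.edgeFinset, ((𝒯.filter (fun t => e ∈ t.sym2)).card : ℝ) = 3 * T := by
      rw [← Nat.cast_sum, hsum]; push_cast; ring
    linarith
  set u := ((T:ℝ)*ε) ^ ((1:ℝ)/3) with hu
  have hu0 : 0 ≤ u := Real.rpow_nonneg (by positivity) _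
  have hu3 : u^3 = T * ε := by
    rw [hu, ← Real.rpow_natCast (((T:ℝ)*ε) ^ ((1:ℝ)/3)) 3, ← Real.rpow_mul (by positivity)]
    norm_num
  have hτu : τ * u^2 = 12 * T := by
    have hpowle : ∀ x y : ℝ, 0 ≤ x → 0 ≤ y → x^(3:ℕ) = y^(3:ℕ) → x = y := by
      intro x y hx hy h
      exact le_antisymm ((pow_le_pow_iff_left₀ hx hy (by norm_num)).1 h.le)
        ((pow_le_pow_iff_left₀ hy hx (by norm_num)).1 h.ge)
    have hc1 : (((T:ℝ)/ε^2) ^ ((1:ℝ)/3))^(3:ℕ) = (T:ℝ)/ε^2 := by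
      rw [← Real.rpow_natCast (((T:ℝ)/ε^2) ^ ((1:ℝ)/3)) 3, ← Real.rpow_mul (by positivity)]
      norm_num
    have hc2 : (u^2)^(3:ℕ) = ((T:ℝ)*ε)^2 := by
      rw [hu, ← pow_mul, show (2*3 : ℕ) = 6 from rfl,
        ← Real.rpow_natCast (((T:ℝ)*ε) ^ ((1:ℝ)/3)) 6, ← Real.rpow_mul (by positivity),
        show (1:ℝ)/3*(6:ℕ) = ((2:ℕ):ℝ) by push_cast; norm_num, Real.rpow_natCast]
    have hcube : (τ*u^2)^(3:ℕ) = (12*(T:ℝ))^(3:ℕ) := by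
      rw [mul_pow, hτ, mul_pow, hc1, hc2]
      field_simp
    exact hpowle _ _ (by positivity) (by positivity) hcube
  have hmu : (m:ℝ) ≤ u^2 / 4 := by
    have h1 : (m:ℝ)*τ ≤ (u^2/4)*τ := by nlinarith [hmτ, hτu]
    exact le_of_mul_le_mul_right h1 hτ0
  rcases Nat.eq_zero_or_pos H with h0 | hHpos
  · rw [h0]; push_cast; positivity
  have hm3 : 3 ≤ m := by
    obtain ⟨Δ, hΔ⟩ := Finset.card_pos.mp hHpos
    have hΔ𝒯 : Δ ∈ 𝒯 := (Finset.mem_filter.mp hΔ).1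
    have hsub : G.edgeFinset.filter (fun e => e ∈ Δ.sym2) ⊆ Eh := by
      intro e he
      obtain ⟨he1, he2⟩ := Finset.mem_filter.mp he
      exact heavy_edge Δ hΔ e he2 he1

    calc 3 = (G.edgeFinset.filter (fun e => e ∈ Δ.sym2)).card :=
          (my_tri_edges G (SimpleGraph.mem_cliqueFinset_iff.mp hΔ𝒯)).symm
      _ ≤ m := Finset.card_le_card hsub
  have hex : ∃ k : ℕ, m < k.choose 2 := by
    refine ⟨m+2, ?_⟩
    have h1 := my_c2 (m+1)
    nlinarith [h1]
  obtain ⟨k, hkspec, hkmin⟩ : ∃ k : ℕ, m < k.choose 2 ∧ ∀ j, j < k → ¬ m < j.choose 2 :=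
    ⟨Nat.find hex, Nat.find_spec hex, fun j hj => Nat.find_min hex hj⟩
  have hk4 : 4 ≤ k := by
    by_contra h
    push_neg at h
    have h1 : k.choose 2 ≤ Nat.choose 3 2 := Nat.choose_le_choose 2 (by omega)
    have h2 : Nat.choose 3 2 = 3 := by decide
    omega
  have hk1 : (k-1).choose 2 ≤ m := by
    have := hkmin (k-1) (by omega)
    omega
  have hHk : H + 1 ≤ k.choose 3 := by
    by_contra h
    push_neg at h
    have hchoose : k.choose 3 ≤ H := by omega
    have hsized : (((𝒯.filter fun Δ => ¬ P Δ) : Finset (Finset V)) : Set (Finset V)).Sized 3 :=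
      fun s hs =>
        (SimpleGraph.mem_cliqueFinset_iff.mp
          ((Finset.mem_filter.mp (Finset.mem_coe.mp hs)).1)).card_eq
    have hkk := my_kk _ hsized k (by omega) hchoose
    have hshadow : (∂ (𝒯.filter fun Δ => ¬ P Δ)).card ≤ m := by
      set S : Sym2 V → Finset V :=
        Sym2.lift ⟨fun x y => ({x,y} : Finset V), fun x y => Finset.pair_comm x y⟩ with hS
      have hsub : ∂ (𝒯.filter fun Δ => ¬ P Δ) ⊆ Eh.image S := by
        intro s hs
        rw [Finset.mem_shadow_iff] at hs
        obtain ⟨Δ, hΔ, x, hx, rfl⟩ := hs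
        have hΔ𝒯 : Δ ∈ 𝒯 := (Finset.mem_filter.mp hΔ).1
        have hcard : (Δ.erase x).card = 2 := by
          have h3 := (SimpleGraph.mem_cliqueFinset_iff.mp hΔ𝒯).card_eq
          rw [Finset.card_erase_of_mem hx, h3]
        obtain ⟨y, z, hyz, hyzE⟩ := Finset.card_eq_two.mp hcard
        have hy : y ∈ Δ := (Finset.erase_subset _ _) (hyzE ▸ Finset.mem_insert_self _ _)
        have hz : z ∈ Δ := (Finset.erase_subset _ _)
          (hyzE ▸ (by simp : z ∈ ({y,z} : Finset V)))
        have hesym : s(y,z) ∈ Δ.sym2 := Finset.mk_mem_sym2_iff.mpr ⟨hy, hz⟩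
        have hadj : G.Adj y z :=
          (SimpleGraph.mem_cliqueFinset_iff.mp hΔ𝒯).isClique
            (Finset.mem_coe.mpr hy) (Finset.mem_coe.mpr hz) hyz
        have heE : s(y,z) ∈ G.edgeFinset := SimpleGraph.mem_edgeFinset.mpr hadj
        have hEhmem : s(y,z) ∈ Eh := heavy_edge Δ hΔ _ hesym heE
        refine Finset.mem_image.mpr ⟨s(y,z), hEhmem, ?_⟩
        rw [hyzE, hS, Sym2.lift_mk]
      calc (∂ (𝒯.filter fun Δ => ¬ P Δ)).card ≤ (Eh.image S).card :=
            Finset.card_le_card hsub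
        _ ≤ m := Finset.card_image_le
    omega
  set a := k - 2 with ha
  have ha2 : 2 ≤ a := by omega
  have ha2R : (2:ℝ) ≤ (a:ℝ) := by exact_mod_cast ha2
  have hb : (a:ℝ)*((a:ℝ)+1) ≤ 2*m := by
    have h1 : (a+1).choose 2 ≤ m := by
      rw [show a+1 = k-1 by omega]; exact hk1
    have h2 : a*(a+1) ≤ 2*m := by
      rw [← my_c2 a]; omega
    exact_mod_cast h2
  have hH6 : 6*(H:ℝ) + 6 ≤ (a:ℝ)*((a:ℝ)+1)*((a:ℝ)+2) := by
    have h1 : 6*(H+1) ≤ 6*(k.choose 3) := by omega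
    have h2 : k.choose 3 = (a+2).choose 3 := by rw [show a+2 = k by omega]
    rw [h2, my_c3 a] at h1
    exact_mod_cast h1
  set sb := Real.sqrt ((a:ℝ)*((a:ℝ)+1)) with hsb
  have hsb0 : 0 ≤ sb := Real.sqrt_nonneg _
  have hsb2 : sb^2 = (a:ℝ)*((a:ℝ)+1) := Real.sq_sqrt (by positivity)
  have has : (a:ℝ) ≤ sb := by
    have h1 : (a:ℝ) = Real.sqrt ((a:ℝ)^2) := (Real.sqrt_sq (by positivity)).symm
    rw [h1, hsb]
    exact Real.sqrt_le_sqrt (by nlinarith)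
  have hsu : Real.sqrt 2 * sb ≤ u := by
    have h2b : 2*((a:ℝ)*((a:ℝ)+1)) ≤ u^2 := by linarith
    calc Real.sqrt 2 * sb = Real.sqrt (2*((a:ℝ)*((a:ℝ)+1))) :=
          (Real.sqrt_mul (by norm_num) _).symm
      _ ≤ Real.sqrt (u^2) := Real.sqrt_le_sqrt h2b
      _ = u := Real.sqrt_sq hu0
  have hs2 : Real.sqrt 2 ^ 2 = 2 := Real.sq_sqrt (by norm_num)
  have hs2' : (1.41:ℝ) ≤ Real.sqrt 2 := by
    nlinarith [Real.sqrt_nonneg 2, hs2]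
  have hsb3 : (0:ℝ) ≤ sb^3 := by positivity
  have hcube : (Real.sqrt 2 * sb)^3 ≤ u^3 := by
    apply pow_le_pow_left₀ (by positivity) hsu
  have e4 : (Real.sqrt 2 * sb)^3 = 2 * Real.sqrt 2 * sb^3 := by
    have h1 : (Real.sqrt 2)^3 = 2 * Real.sqrt 2 := by rw [pow_succ, hs2]
    rw [mul_pow, h1]
  have e1 : (a:ℝ)*((a:ℝ)+1)*((a:ℝ)+2) ≤ 2*(a:ℝ)*((a:ℝ)*((a:ℝ)+1)) + 6 := by
    nlinarith [ha2R]
  have e2 : 2*(a:ℝ)*((a:ℝ)*((a:ℝ)+1)) ≤ 2*sb^3 := by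
    nlinarith [has, hsb2, hsb0]
  have e3 : 6*(H:ℝ) ≤ 2*sb^3 := by linarith
  have hgoal : 8*(H:ℝ) ≤ u^3 := by
    have hprod : (1.41:ℝ)*sb^3 ≤ Real.sqrt 2 * sb^3 :=
      mul_le_mul_of_nonneg_right hs2' hsb3
    rw [e4] at hcube
    linarith
  rw [hu3] at hgoal
  linarith
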